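/- Let c ≤ a ≤ b < d be positive integers. Then for every positive integer n, ex(n, S_{a,b}, S_{c,d}) ≤ r·n. -/

import Mathlib

open SimpleGraph Finset

/-- The number of subgraphs of `G` isomorphic to `H`. -/
noncomputable def copyCount {α β : Type*} (H : SimpleGraph α) (G : SimpleGraph β) : ℕ :=
  Set.ncard {G' : G.Subgraph | Nonempty (H ≃g G'.coe)}

/-- `G` contains a subgraph isomorphic to `F`. -/
def Contains {α β : Type*} (F : SimpleGraph α) (G : SimpleGraph β) : Prop :=
  ∃ f : F →g G, Function.Injective f

/-- The generalized Turán number `ex(n, H, F)`: the maximum number of subgraphs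
isomorphic to `H` in an `F`-free graph on `n` vertices. -/
noncomputable def exGen {α β : Type*} (n : ℕ) (H : SimpleGraph α) (F : SimpleGraph β) : ℕ :=
  sSup {N | ∃ G : SimpleGraph (Fin n), ¬ Contains F G ∧ N = copyCount H G}

/-- The double star `S_{a,b}`: central edge `0-1`, vertices `2,…,a+1` are leaves
attached to `0`, and vertices `a+2,…,a+b+1` are leaves attached to `1`. -/
def doubleStar (a b : ℕ) : SimpleGraph (Fin (a + b + 2)) :=
  SimpleGraph.fromRel (fun x y =>
    (x.val = 0 ∧ y.val = 1) ∨ (x.val = 0 ∧ 2 ≤ y.val ∧ y.val < a + 2) ∨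
      (x.val = 1 ∧ a + 2 ≤ y.val))

lemma exists_disjoint_subsets {α : Type*} [DecidableEq α] (A B : Finset α) (c d : ℕ)
    (hA : c ≤ A.card) (hB : d ≤ B.card) (hAB : c + d ≤ (A ∪ B).card) :
    ∃ LA LB : Finset α, LA ⊆ A ∧ LB ⊆ B ∧ LA.card = c ∧ LB.card = d ∧ Disjoint LA LB := by
  by_cases h : d ≤ (B \ A).card
  · obtain ⟨LB, hLB, hLBc⟩ := exists_subset_card_eq h
    obtain ⟨LA, hLA, hLAc⟩ := exists_subset_card_eq hA
    exact ⟨LA, LB, hLA, hLB.trans sdiff_subset, hLAc, hLBc, disjoint_sdiff.mono hLA hLB⟩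
  · push_neg at h
    have hIcard : d - (B \ A).card ≤ (B ∩ A).card := by
      have h2 : (B \ A).card + (B ∩ A).card = B.card := card_sdiff_add_card_inter B A
      omega
    obtain ⟨S, hS, hSc⟩ := exists_subset_card_eq hIcard
    have hSA : S ⊆ A := hS.trans inter_subset_right
    have hdisjS : Disjoint (B \ A) S := by
      rw [disjoint_comm]; exact (disjoint_sdiff.mono_left hSA : Disjoint S (B \ A))
    have hLBcard : ((B \ A) ∪ S).card = d := by
      rw [card_union_of_disjoint hdisjS, hSc]; omega
    have hcardAB : (A ∪ B).card ≤ A.card + (B \ A).card := by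
      rw [union_comm, ← card_sdiff_add_card]; omega
    have hALB : c ≤ (A \ ((B \ A) ∪ S)).card := by
      have he : A \ ((B \ A) ∪ S) = A \ S := by
        ext x; simp only [mem_sdiff, mem_union]; tauto
      rw [he, card_sdiff_of_subset hSA, hSc]
      omega
    obtain ⟨LA, hLA, hLAc⟩ := exists_subset_card_eq hALB
    exact ⟨LA, (B \ A) ∪ S, hLA.trans sdiff_subset,
      union_subset sdiff_subset (hS.trans inter_subset_left), hLAc, hLBcard,
      sdiff_disjoint.mono hLA le_rfl⟩

lemma doubleStar_adj (a b : ℕ) (i j : Fin (a+b+2)) :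
    (doubleStar a b).Adj i j ↔ i ≠ j ∧
      (((i.val = 0 ∧ j.val = 1) ∨ (i.val = 0 ∧ 2 ≤ j.val ∧ j.val < a + 2) ∨
        (i.val = 1 ∧ a + 2 ≤ j.val)) ∨
       ((j.val = 0 ∧ i.val = 1) ∨ (j.val = 0 ∧ 2 ≤ i.val ∧ i.val < a + 2) ∨
        (j.val = 1 ∧ a + 2 ≤ i.val))) := by
  rw [doubleStar, fromRel_adj]

lemma contains_doubleStar {β : Type*} {G : SimpleGraph β} {c d : ℕ} {u v : β}
    (huv : G.Adj u v) (LA LB : Finset β)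
    (hLAsub : ∀ x ∈ LA, G.Adj u x) (hLBsub : ∀ x ∈ LB, G.Adj v x)
    (hvA : v ∉ LA) (huB : u ∉ LB) (hcA : LA.card = c) (hdB : LB.card = d)
    (hdisj : Disjoint LA LB) : Contains (doubleStar c d) G := by
  classical
  let eA : Fin c ≃ ↥LA := (Fintype.equivFinOfCardEq (by rw [Fintype.card_coe, hcA])).symm
  let eB : Fin d ≃ ↥LB := (Fintype.equivFinOfCardEq (by rw [Fintype.card_coe, hdB])).symm
  let f : Fin (c + d + 2) → β := fun i =>
    if h0 : i.val = 0 then u else if h1 : i.val = 1 then v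
    else if h2 : i.val < c + 2 then (eA ⟨i.val - 2, by omega⟩ : β)
    else (eB ⟨i.val - 2 - c, by omega⟩ : β)
  have huv' : u ≠ v := huv.ne
  have huA : u ∉ LA := fun h => (hLAsub u h).ne rfl
  have hvB : v ∉ LB := fun h => (hLBsub v h).ne rfl
  have hf0 : ∀ i : Fin (c + d + 2), i.val = 0 → f i = u := by
    intro i h; simp only [f, dif_pos h]
  have hf1 : ∀ i : Fin (c + d + 2), i.val = 1 → f i = v := by
    intro i h; simp only [f]; rw [dif_neg (by omega), dif_pos h]
  have hfA : ∀ (i : Fin (c + d + 2)) (h2 : 2 ≤ i.val) (h3 : i.val < c + 2),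
      f i = (eA ⟨i.val - 2, by omega⟩ : β) := by
    intro i h2 h3; simp only [f]
    rw [dif_neg (by omega), dif_neg (by omega), dif_pos h3]
  have hfB : ∀ (i : Fin (c + d + 2)) (h2 : c + 2 ≤ i.val),
      f i = (eB ⟨i.val - 2 - c, by omega⟩ : β) := by
    intro i h2; simp only [f]
    rw [dif_neg (by omega), dif_neg (by omega), dif_neg (by omega)]
  have hAmem : ∀ (k : Fin c), (eA k : β) ∈ LA := fun k => (eA k).2
  have hBmem : ∀ (k : Fin d), (eB k : β) ∈ LB := fun k => (eB k).2
  have hregion : ∀ i : Fin (c + d + 2), i.val = 0 ∨ i.val = 1 ∨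
      (2 ≤ i.val ∧ i.val < c + 2) ∨ c + 2 ≤ i.val := by intro i; omega
  have hinj : Function.Injective f := by
    intro i j hij
    have hABd : ∀ x, x ∈ LA → x ∈ LB → False := fun x h1 h2 =>
      (Finset.disjoint_left.mp hdisj h1 h2)
    rcases hregion i with hi | hi | ⟨hi, hi'⟩ | hi <;>
      rcases hregion j with hj | hj | ⟨hj, hj'⟩ | hj
    · exact Fin.ext (by omega)
    · rw [hf0 i hi, hf1 j hj] at hij; exact absurd hij huv'
    · rw [hf0 i hi, hfA j hj hj'] at hij; exact absurd (hij ▸ hAmem _) huA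
    · rw [hf0 i hi, hfB j hj] at hij; exact absurd (hij ▸ hBmem _) huB
    · rw [hf1 i hi, hf0 j hj] at hij; exact absurd hij.symm huv'
    · exact Fin.ext (by omega)
    · rw [hf1 i hi, hfA j hj hj'] at hij; exact absurd (hij ▸ hAmem _) hvA
    · rw [hf1 i hi, hfB j hj] at hij; exact absurd (hij ▸ hBmem _) hvB
    · rw [hfA i hi hi', hf0 j hj] at hij; exact absurd (hij.symm ▸ hAmem _) huA
    · rw [hfA i hi hi', hf1 j hj] at hij; exact absurd (hij.symm ▸ hAmem _) hvA
    · rw [hfA i hi hi', hfA j hj hj'] at hij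
      have hval : i.val - 2 = j.val - 2 := congrArg Fin.val (eA.injective (Subtype.ext hij))
      exact Fin.ext (by omega)
    · rw [hfA i hi hi', hfB j hj] at hij
      exact absurd (hAmem _) (fun h => hABd _ h (hij ▸ hBmem _))
    · rw [hfB i hi, hf0 j hj] at hij; exact absurd (hij.symm ▸ hBmem _) huB
    · rw [hfB i hi, hf1 j hj] at hij; exact absurd (hij.symm ▸ hBmem _) hvB
    · rw [hfB i hi, hfA j hj hj'] at hij
      exact absurd (hAmem _) (fun h => hABd _ h (hij.symm ▸ hBmem _))
    · rw [hfB i hi, hfB j hj] at hij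
      have hval : i.val - 2 - c = j.val - 2 - c := congrArg Fin.val (eB.injective (Subtype.ext hij))
      exact Fin.ext (by omega)
  have hhom : ∀ i j : Fin (c + d + 2), (doubleStar c d).Adj i j → G.Adj (f i) (f j) := by
    have base : ∀ i j : Fin (c + d + 2),
        ((i.val = 0 ∧ j.val = 1) ∨ (i.val = 0 ∧ 2 ≤ j.val ∧ j.val < c + 2) ∨
          (i.val = 1 ∧ c + 2 ≤ j.val)) → G.Adj (f i) (f j) := by
      rintro i j (⟨hi, hj⟩ | ⟨hi, hj, hj'⟩ | ⟨hi, hj⟩)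
      · rw [hf0 i hi, hf1 j hj]; exact huv
      · rw [hf0 i hi, hfA j hj hj']; exact hLAsub _ (hAmem _)
      · rw [hf1 i hi, hfB j hj]; exact hLBsub _ (hBmem _)
    intro i j hadj
    rw [doubleStar_adj] at hadj
    rcases hadj.2 with h | h
    · exact base i j h
    · exact (base j i h).symm
  exact ⟨⟨f, fun h => hhom _ _ h⟩, hinj⟩

lemma set_swap {V : Type*} (u v : V) (Lu Lv : Finset V) :
    ({v, u} ∪ ↑Lv ∪ ↑Lu : Set V) = {u, v} ∪ ↑Lu ∪ ↑Lv := by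
  ext z
  simp only [Set.mem_union, Set.mem_insert_iff, Set.mem_singleton_iff]
  tauto


/-- The reconstruction relation for a double-star copy. -/
def dsRel {V : Type*} (u v : V) (Lu Lv : Finset V) (x y : V) : Prop :=
  (x = u ∧ y = v) ∨ (y = u ∧ x = v) ∨ (x = u ∧ y ∈ Lu) ∨ (y = u ∧ x ∈ Lu) ∨
    (x = v ∧ y ∈ Lv) ∨ (y = v ∧ x ∈ Lv)

lemma copy_structure {n a b : ℕ} (ha : 0 < a) (hb : 0 < b) {G : SimpleGraph (Fin n)}
    (G' : G.Subgraph) (e : (doubleStar a b) ≃g G'.coe) :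
    ∃ (u v : Fin n) (Lu Lv : Finset (Fin n)),
      G.Adj u v ∧ Lu.card = a ∧ Lv.card = b ∧
      (∀ x ∈ Lu, G.Adj u x ∧ x ≠ v) ∧ (∀ x ∈ Lv, G.Adj v x ∧ x ≠ u ∧ x ∉ Lu) ∧
      G'.verts = {u, v} ∪ ↑Lu ∪ ↑Lv ∧
      (∀ x y, G'.Adj x y ↔ dsRel u v Lu Lv x y) := by
  classical
  set f : Fin (a + b + 2) → Fin n := fun i => (e i : Fin n) with hf
  have hfinj : Function.Injective f := by
    intro i j hij
    exact e.toEquiv.injective (Subtype.ext hij)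
  have hAdjIff : ∀ i j, G'.Adj (f i) (f j) ↔ (doubleStar a b).Adj i j := by
    intro i j
    exact e.map_adj_iff
  have hverts : G'.verts = Set.range f := by
    ext x; constructor
    · intro hx
      refine ⟨e.symm ⟨x, hx⟩, ?_⟩
      show ((e (e.symm ⟨x, hx⟩) : G'.verts) : Fin n) = x
      rw [RelIso.apply_symm_apply]
    · rintro ⟨i, rfl⟩; exact (e i).2
  set Iu : Finset (Fin (a+b+2)) := univ.filter (fun j => 2 <= j.val && j.val < a + 2) with hIu
  set Iv : Finset (Fin (a+b+2)) := univ.filter (fun j => a + 2 <= j.val) with hIv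
  have hIu_mem : ∀ j : Fin (a+b+2), j ∈ Iu ↔ 2 ≤ j.val ∧ j.val < a + 2 := by
    intro j; simp [hIu]
  have hIv_mem : ∀ j : Fin (a+b+2), j ∈ Iv ↔ a + 2 ≤ j.val := by
    intro j; simp [hIv]
  have hIu_card : Iu.card = a := by
    classical
    have himg : Iu = (range a).image (fun k =>
        if h : k + 2 < a + b + 2 then (⟨k+2, h⟩ : Fin (a+b+2)) else 0) := by
      ext j
      rw [hIu_mem j]
      simp only [mem_image, mem_range]
      constructor
      · rintro ⟨h1, h2⟩
        refine ⟨j.val - 2, by omega, ?_⟩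
        rw [dif_pos (by omega)]
        exact Fin.ext (show j.val - 2 + 2 = j.val by omega)
      · rintro ⟨k, hk, rfl⟩
        rw [dif_pos (by omega)]
        exact ⟨by show 2 ≤ k + 2; omega, by show k + 2 < a + 2; omega⟩
    rw [himg, card_image_of_injOn, card_range]
    intro x hx y hy h
    rw [mem_coe, mem_range] at hx hy
    simp only at h
    rw [dif_pos (by omega : x + 2 < a + b + 2), dif_pos (by omega : y + 2 < a + b + 2)] at h
    have : x + 2 = y + 2 := congrArg Fin.val h
    omega
  have hIv_card : Iv.card = b := by
    classical
    have himg : Iv = (range b).image (fun k =>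
        if h : k + a + 2 < a + b + 2 then (⟨k+a+2, h⟩ : Fin (a+b+2)) else 0) := by
      ext j
      rw [hIv_mem j]
      simp only [mem_image, mem_range]
      constructor
      · intro h1
        refine ⟨j.val - (a+2), by omega, ?_⟩
        rw [dif_pos (by omega)]
        exact Fin.ext (show j.val - (a+2) + a + 2 = j.val by omega)
      · rintro ⟨k, hk, rfl⟩
        rw [dif_pos (by omega)]
        show a + 2 ≤ k + a + 2
        omega
    rw [himg, card_image_of_injOn, card_range]
    intro x hx y hy h
    rw [mem_coe, mem_range] at hx hy
    simp only at h
    rw [dif_pos (by omega : x + a + 2 < a + b + 2), dif_pos (by omega : y + a + 2 < a + b + 2)] at h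
    have : x + a + 2 = y + a + 2 := congrArg Fin.val h
    omega
  have h0val : (0 : Fin (a+b+2)).val = 0 := rfl
  have h1val : (1 : Fin (a+b+2)).val = 1 := by
    show (1 : Fin (a+b+2)).val = 1
    simp [Fin.val_one]
  refine ⟨f 0, f 1, Iu.image f, Iv.image f, ?_, ?_, ?_, ?_, ?_, ?_, ?_⟩
  · -- G.Adj (f 0) (f 1)
    refine Subgraph.adj_sub _ ((hAdjIff 0 1).mpr ?_)
    rw [doubleStar_adj]
    refine ⟨by intro h; rw [Fin.ext_iff, h0val, h1val] at h; omega, Or.inl (Or.inl ⟨h0val, h1val⟩)⟩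
  · rw [card_image_of_injective _ hfinj, hIu_card]
  · rw [card_image_of_injective _ hfinj, hIv_card]
  · rintro x hx
    rw [mem_image] at hx
    obtain ⟨j, hj, rfl⟩ := hx
    rw [hIu_mem] at hj
    constructor
    · refine Subgraph.adj_sub _ ((hAdjIff 0 j).mpr ?_)
      rw [doubleStar_adj]
      exact ⟨by intro h; rw [Fin.ext_iff, h0val] at h; omega,
        Or.inl (Or.inr (Or.inl ⟨h0val, hj.1, hj.2⟩))⟩
    · exact fun h => by
        have := hfinj h
        rw [Fin.ext_iff, h1val] at this; omega
  · rintro x hx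
    rw [mem_image] at hx
    obtain ⟨j, hj, rfl⟩ := hx
    rw [hIv_mem] at hj
    refine ⟨?_, ?_, ?_⟩
    · refine Subgraph.adj_sub _ ((hAdjIff 1 j).mpr ?_)
      rw [doubleStar_adj]
      exact ⟨by intro h; rw [Fin.ext_iff, h1val] at h; omega,
        Or.inl (Or.inr (Or.inr ⟨h1val, hj⟩))⟩
    · exact fun h => by
        have := hfinj h
        rw [Fin.ext_iff, h0val] at this; omega
    · intro hmem
      rw [mem_image] at hmem
      obtain ⟨j', hj', hjj⟩ := hmem
      rw [hIu_mem] at hj'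
      have := hfinj hjj
      rw [Fin.ext_iff] at this
      omega
  · -- verts
    rw [hverts]
    ext x
    simp only [Set.mem_range, Set.mem_union, Set.mem_insert_iff, Set.mem_singleton_iff,
      coe_image, Set.mem_image, mem_coe]
    constructor
    · rintro ⟨i, rfl⟩
      rcases (by omega : i.val = 0 ∨ i.val = 1 ∨ (2 ≤ i.val ∧ i.val < a + 2) ∨ a + 2 ≤ i.val)
        with h | h | h | h
      · exact Or.inl (Or.inl (Or.inl (by rw [show i = 0 from Fin.ext (by rw [h0val]; exact h)])))
      · exact Or.inl (Or.inl (Or.inr (by rw [show i = 1 from Fin.ext (by rw [h1val]; exact h)])))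
      · exact Or.inl (Or.inr ⟨i, (hIu_mem i).mpr h, rfl⟩)
      · exact Or.inr ⟨i, (hIv_mem i).mpr h, rfl⟩
    · rintro (((rfl | rfl) | ⟨i, _, rfl⟩) | ⟨i, _, rfl⟩)
      exacts [⟨0, rfl⟩, ⟨1, rfl⟩, ⟨i, rfl⟩, ⟨i, rfl⟩]
  · -- Adj characterization
    intro x y
    constructor
    · intro hxy
      have hx : x ∈ G'.verts := hxy.fst_mem
      have hy : y ∈ G'.verts := hxy.snd_mem
      rw [hverts] at hx hy
      obtain ⟨i, rfl⟩ := hx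
      obtain ⟨j, rfl⟩ := hy
      rw [hAdjIff, doubleStar_adj] at hxy
      obtain ⟨hne, hrel⟩ := hxy
      have hcase : ∀ i' j' : Fin (a+b+2),
          ((i'.val = 0 ∧ j'.val = 1) ∨ (i'.val = 0 ∧ 2 ≤ j'.val ∧ j'.val < a + 2) ∨
            (i'.val = 1 ∧ a + 2 ≤ j'.val)) →
          (f i' = f 0 ∧ f j' = f 1) ∨ (f i' = f 0 ∧ f j' ∈ Iu.image f) ∨
            (f i' = f 1 ∧ f j' ∈ Iv.image f) := by
        rintro i' j' (⟨h1, h2⟩ | ⟨h1, h2⟩ | ⟨h1, h2⟩)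
        · exact Or.inl ⟨by rw [show i' = 0 from Fin.ext (by rw [h0val]; exact h1)],
            by rw [show j' = 1 from Fin.ext (by rw [h1val]; exact h2)]⟩
        · exact Or.inr (Or.inl ⟨by rw [show i' = 0 from Fin.ext (by rw [h0val]; exact h1)],
            mem_image_of_mem f ((hIu_mem j').mpr h2)⟩)
        · exact Or.inr (Or.inr ⟨by rw [show i' = 1 from Fin.ext (by rw [h1val]; exact h1)],
            mem_image_of_mem f ((hIv_mem j').mpr h2)⟩)
      unfold dsRel
      rcases hrel with h | h
      · rcases hcase i j h with ⟨h1, h2⟩ | ⟨h1, h2⟩ | ⟨h1, h2⟩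
        · exact Or.inl ⟨h1, h2⟩
        · exact Or.inr (Or.inr (Or.inl ⟨h1, h2⟩))
        · exact Or.inr (Or.inr (Or.inr (Or.inr (Or.inl ⟨h1, h2⟩))))
      · rcases hcase j i h with ⟨h1, h2⟩ | ⟨h1, h2⟩ | ⟨h1, h2⟩
        · exact Or.inr (Or.inl ⟨h1, h2⟩)
        · exact Or.inr (Or.inr (Or.inr (Or.inl ⟨h1, h2⟩)))
        · exact Or.inr (Or.inr (Or.inr (Or.inr (Or.inr ⟨h1, h2⟩))))
    · intro hrel
      have hadj : ∀ i' j' : Fin (a+b+2),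
          ((i'.val = 0 ∧ j'.val = 1) ∨ (i'.val = 0 ∧ 2 ≤ j'.val ∧ j'.val < a + 2) ∨
            (i'.val = 1 ∧ a + 2 ≤ j'.val)) → G'.Adj (f i') (f j') := by
        rintro i' j' h
        refine (hAdjIff i' j').mpr ?_
        rw [doubleStar_adj]
        refine ⟨?_, Or.inl h⟩
        rcases h with ⟨h1, h2⟩ | ⟨h1, h2⟩ | ⟨h1, h2⟩ <;>
          · intro hh; rw [Fin.ext_iff] at hh; omega
      unfold dsRel at hrel
      rcases hrel with ⟨rfl, rfl⟩ | ⟨rfl, rfl⟩ | ⟨rfl, hy⟩ | ⟨rfl, hx⟩ | ⟨rfl, hy⟩ | ⟨rfl, hx⟩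
      · exact hadj 0 1 (Or.inl ⟨h0val, h1val⟩)
      · exact (hadj 0 1 (Or.inl ⟨h0val, h1val⟩)).symm
      · obtain ⟨j, hj, rfl⟩ := mem_image.mp hy
        exact hadj 0 j (Or.inr (Or.inl ⟨h0val, (hIu_mem j).mp hj⟩))
      · obtain ⟨j, hj, rfl⟩ := mem_image.mp hx
        exact (hadj 0 j (Or.inr (Or.inl ⟨h0val, (hIu_mem j).mp hj⟩))).symm
      · obtain ⟨j, hj, rfl⟩ := mem_image.mp hy
        exact hadj 1 j (Or.inr (Or.inr ⟨h1val, (hIv_mem j).mp hj⟩))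
      · obtain ⟨j, hj, rfl⟩ := mem_image.mp hx
        exact (hadj 1 j (Or.inr (Or.inr ⟨h1val, (hIv_mem j).mp hj⟩))).symm

lemma dsRel_swap {V : Type*} (u v : V) (Lu Lv : Finset V) (x y : V) :
    dsRel v u Lv Lu x y ↔ dsRel u v Lu Lv x y := by
  unfold dsRel; tauto


lemma card_le_sigma_choose {α γ : Type*} [DecidableEq α] (T : Finset γ) (M : Finset α) (a b : ℕ)
    (fL gL : γ → Finset α)
    (hinj : ∀ t1 ∈ T, ∀ t2 ∈ T, fL t1 = fL t2 → gL t1 = gL t2 → t1 = t2)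
    (hmem : ∀ t ∈ T, fL t ⊆ M ∧ (fL t).card = a ∧ gL t ⊆ M \ fL t ∧ (gL t).card = b) :
    T.card ≤ M.card.choose a * (M.card - a).choose b := by
  classical
  have key : T.card ≤ ((M.powersetCard a).sigma fun L => (M \ L).powersetCard b).card := by
    apply Finset.card_le_card_of_injOn (fun t => (⟨fL t, gL t⟩ : Σ _ : Finset α, Finset α))
    · intro t ht
      obtain ⟨h1, h2, h3, h4⟩ := hmem t ht
      simp only [mem_coe, mem_sigma, mem_powersetCard]
      exact ⟨⟨h1, h2⟩, h3, h4⟩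
    · intro t1 h1 t2 h2 heq
      have h1' : fL t1 = fL t2 := congrArg Sigma.fst heq
      have h2' : gL t1 = gL t2 := by
        have := (Sigma.mk.inj_iff.mp heq).2
        exact eq_of_heq this
      exact hinj t1 (by simpa using h1) t2 (by simpa using h2) h1' h2'
  rw [Finset.card_sigma] at key
  refine key.trans ?_
  have : ∀ L ∈ M.powersetCard a, ((M \ L).powersetCard b).card = (M.card - a).choose b := by
    intro L hL
    rw [mem_powersetCard] at hL
    rw [card_powersetCard, card_sdiff_of_subset hL.1, hL.2]
  rw [Finset.sum_congr rfl this, Finset.sum_const, card_powersetCard, smul_eq_mul]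

lemma card_le_prod_choose {α γ : Type*} [DecidableEq α] (T : Finset γ) (A B : Finset α) (a b : ℕ)
    (fL gL : γ → Finset α)
    (hinj : ∀ t1 ∈ T, ∀ t2 ∈ T, fL t1 = fL t2 → gL t1 = gL t2 → t1 = t2)
    (hmem : ∀ t ∈ T, fL t ⊆ A ∧ (fL t).card = a ∧ gL t ⊆ B ∧ (gL t).card = b) :
    T.card ≤ A.card.choose a * B.card.choose b := by
  classical
  have key : T.card ≤ ((A.powersetCard a) ×ˢ (B.powersetCard b)).card := by
    apply Finset.card_le_card_of_injOn (fun t => (fL t, gL t))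
    · intro t ht
      obtain ⟨h1, h2, h3, h4⟩ := hmem t ht
      simp only [mem_coe, mem_product, mem_powersetCard]
      exact ⟨⟨h1, h2⟩, h3, h4⟩
    · intro t1 h1 t2 h2 heq
      simp only [Prod.mk.injEq] at heq
      exact hinj t1 (by simpa using h1) t2 (by simpa using h2) heq.1 heq.2
  rwa [Finset.card_product, card_powersetCard, card_powersetCard] at key

set_option maxHeartbeats 2000000 in
lemma key_count {n a b c d : ℕ} (hn : 0 < n) (hc : 0 < c) (hca : c ≤ a) (hab : a ≤ b)
    (hbd : b < d) (G : SimpleGraph (Fin n)) (hfree : ¬ Contains (doubleStar c d) G) :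
    (if a = b then 2 else 1) * _root_.copyCount (doubleStar a b) G ≤
      (max ((c + d) * ((c + d - 1).choose a * (c + d - 1 - a).choose b))
           (d * ((d - 1).choose a * (d - 1).choose b))) * n := by
  classical
  have ha : 0 < a := lt_of_lt_of_le hc hca
  have hb : 0 < b := lt_of_lt_of_le ha hab
  have hd2 : 2 ≤ d := by omega
  set T1 := (c + d - 1).choose a * (c + d - 1 - a).choose b with hT1
  set T2 := (d - 1).choose a * (d - 1).choose b with hT2
  set R := max ((c + d) * T1) (d * T2) with hR
  set NA : Fin n → Fin n → Finset (Fin n) := fun u v => (G.neighborFinset u).erase v with hNA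
  have hmemNA : ∀ u v, ∀ x ∈ NA u v, G.Adj u x ∧ x ≠ v := by
    intro u v x hx
    rw [hNA] at hx
    rw [mem_erase, mem_neighborFinset] at hx
    exact ⟨hx.2, hx.1⟩
  have hcardNA : ∀ u v, G.Adj u v → (NA u v).card = (G.neighborFinset u).card - 1 := by
    intro u v huv
    rw [hNA]
    exact card_erase_of_mem ((SimpleGraph.mem_neighborFinset G u v).mpr huv)
  set P : Fin n × Fin n × Finset (Fin n) × Finset (Fin n) → Prop := fun t =>
    G.Adj t.1 t.2.1 ∧ t.2.2.1.card = a ∧ t.2.2.2.card = b ∧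
      t.2.2.1 ⊆ NA t.1 t.2.1 ∧ t.2.2.2 ⊆ NA t.2.1 t.1 \ t.2.2.1 with hP
  set TT : Finset (Fin n × Fin n × Finset (Fin n) × Finset (Fin n)) := univ.filter P with hTT
  -- Part 2 : TT.card ≤ R * n
  set cnt : Fin n → Fin n → ℕ :=
    fun u v => (TT.filter fun t => t.1 = u ∧ t.2.1 = v).card with hcnt
  have free_bd : ∀ u v, G.Adj u v → c ≤ (NA u v).card → d ≤ (NA v u).card →
      (NA u v ∪ NA v u).card ≤ c + d - 1 := by
    intro u v huv hcA hdB
    by_contra hcon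
    push_neg at hcon
    obtain ⟨LA, LB, h1, h2, h3, h4, h5⟩ :=
      exists_disjoint_subsets (NA u v) (NA v u) c d hcA hdB (by omega)
    exact hfree (contains_doubleStar huv LA LB (fun x hx => (hmemNA u v x (h1 hx)).1)
      (fun x hx => (hmemNA v u x (h2 hx)).1) (fun hv => (hmemNA u v v (h1 hv)).2 rfl)
      (fun hu => (hmemNA v u u (h2 hu)).2 rfl) h3 h4 h5)
  have hinj2 : ∀ u v, ∀ t1 ∈ TT.filter fun t => t.1 = u ∧ t.2.1 = v,
      ∀ t2 ∈ TT.filter fun t => t.1 = u ∧ t.2.1 = v,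
      t1.2.2.1 = t2.2.2.1 → t1.2.2.2 = t2.2.2.2 → t1 = t2 := by
    intro u v t1 h1 t2 h2 hL hM
    obtain ⟨x1, y1, L1, M1⟩ := t1
    obtain ⟨x2, y2, L2, M2⟩ := t2
    simp only [mem_filter] at h1 h2
    obtain ⟨-, hx1, hy1⟩ := h1
    obtain ⟨-, hx2, hy2⟩ := h2
    simp only at hx1 hy1 hx2 hy2 hL hM
    subst hx1; subst hy1; subst hL; subst hM
    rw [hx2, hy2]
  have hmem2 : ∀ u v, ∀ t ∈ TT.filter fun t => t.1 = u ∧ t.2.1 = v,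
      G.Adj u v ∧ t.2.2.1 ⊆ NA u v ∧ t.2.2.1.card = a ∧
        t.2.2.2 ⊆ NA v u \ t.2.2.1 ∧ t.2.2.2.card = b := by
    intro u v t ht
    rw [mem_filter] at ht
    obtain ⟨htT, hu, hv⟩ := ht
    rw [hTT, mem_filter] at htT
    obtain ⟨-, hPt⟩ := htT
    obtain ⟨hadj, hLa, hLb, hsub1, hsub2⟩ := hPt
    subst hu; subst hv
    exact ⟨hadj, hsub1, hLa, hsub2, hLb⟩
  have boundA : ∀ u v, cnt u v ≤
      (NA u v ∪ NA v u).card.choose a * ((NA u v ∪ NA v u).card - a).choose b := by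
    intro u v
    apply card_le_sigma_choose _ _ a b (fun t => t.2.2.1) (fun t => t.2.2.2) (hinj2 u v)
    intro t ht
    obtain ⟨hadj, hs1, hc1, hs2, hc2⟩ := hmem2 u v t ht
    refine ⟨hs1.trans subset_union_left, hc1, ?_, hc2⟩
    intro x hx
    have := hs2 hx
    rw [mem_sdiff] at this ⊢
    exact ⟨subset_union_right this.1, this.2⟩
  have boundB : ∀ u v, cnt u v ≤ (NA u v).card.choose a * (NA v u).card.choose b := by
    intro u v
    apply card_le_prod_choose _ _ _ a b (fun t => t.2.2.1) (fun t => t.2.2.2) (hinj2 u v)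
    intro t ht
    obtain ⟨hadj, hs1, hc1, hs2, hc2⟩ := hmem2 u v t ht
    exact ⟨hs1, hc1, fun x hx => (mem_sdiff.mp (hs2 hx)).1, hc2⟩
  have hcnt_pos : ∀ u v, cnt u v ≠ 0 →
      G.Adj u v ∧ a ≤ (NA u v).card ∧ b ≤ (NA v u).card := by
    intro u v h
    rw [hcnt] at h
    obtain ⟨t, ht⟩ := card_ne_zero.mp h
    obtain ⟨hadj, hs1, hc1, hs2, hc2⟩ := hmem2 u v t ht
    refine ⟨hadj, ?_, ?_⟩
    · rw [← hc1]; exact card_le_card hs1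
    · rw [← hc2]; exact card_le_card (hs2.trans sdiff_subset)
  have per_u : ∀ u, (∑ v, cnt u v) ≤ R := by
    intro u
    set S := univ.filter (fun v => cnt u v ≠ 0) with hS
    have hsum : ∑ v, cnt u v = ∑ v ∈ S, cnt u v := (sum_filter_ne_zero univ).symm
    have hSsub : S ⊆ G.neighborFinset u := by
      intro v hv
      rw [hS, mem_filter] at hv
      exact (SimpleGraph.mem_neighborFinset G u v).mpr (hcnt_pos u v hv.2).1
    have hScard : S.card ≤ (G.neighborFinset u).card := card_le_card hSsub
    by_cases hdeg : (G.neighborFinset u).card ≤ d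
    · have hbound : ∀ v ∈ S, cnt u v ≤ max T1 T2 := by
        intro v hv
        rw [hS, mem_filter] at hv
        obtain ⟨hadj, haA, hbB⟩ := hcnt_pos u v hv.2
        by_cases hM : (NA u v ∪ NA v u).card ≤ c + d - 1
        · refine le_trans (boundA u v) (le_trans ?_ (le_max_left T1 T2))
          rw [hT1]
          exact Nat.mul_le_mul (Nat.choose_le_choose a hM)
            (Nat.choose_le_choose b (by omega))
        · push_neg at hM
          have hBle : (NA v u).card ≤ d - 1 := by
            by_contra hcon
            push_neg at hcon
            have := free_bd u v hadj (le_trans hca haA) (by omega)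
            omega
          have hAle : (NA u v).card ≤ d - 1 := by
            rw [hcardNA u v hadj]; omega
          refine le_trans (boundB u v) (le_trans ?_ (le_max_right T1 T2))
          rw [hT2]
          exact Nat.mul_le_mul (Nat.choose_le_choose a hAle) (Nat.choose_le_choose b hBle)
      calc ∑ v, cnt u v = ∑ v ∈ S, cnt u v := hsum
        _ ≤ S.card * max T1 T2 := by
            refine le_trans (sum_le_card_nsmul S _ (max T1 T2) hbound) ?_
            rw [smul_eq_mul]
        _ ≤ d * max T1 T2 := Nat.mul_le_mul_right _ (le_trans hScard hdeg)
        _ ≤ R := by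
            rcases le_total T1 T2 with h | h
            · rw [max_eq_right h]; exact le_max_right _ _
            · rw [max_eq_left h]
              exact le_trans (Nat.mul_le_mul_right _ (by omega : d ≤ c + d)) (le_max_left _ _)
    · push_neg at hdeg
      have hbound : ∀ v ∈ S, cnt u v ≤ T1 ∧ (G.neighborFinset u).card ≤ c + d := by
        intro v hv
        rw [hS, mem_filter] at hv
        obtain ⟨hadj, haA, hbB⟩ := hcnt_pos u v hv.2
        have hAd : d ≤ (NA u v).card := by
          rw [hcardNA u v hadj]; omega
        have hBc : c ≤ (NA v u).card := le_trans (le_trans hca hab) hbB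
        have hM : (NA u v ∪ NA v u).card ≤ c + d - 1 := by
          by_contra hcon
          push_neg at hcon
          have := free_bd v u hadj.symm hBc hAd
          rw [union_comm] at this
          omega
        have hAle : (NA u v).card ≤ c + d - 1 :=
          le_trans (card_le_card subset_union_left) hM
        constructor
        · refine le_trans (boundA u v) ?_
          rw [hT1]
          exact Nat.mul_le_mul (Nat.choose_le_choose a hM) (Nat.choose_le_choose b (by omega))
        · rw [hcardNA u v hadj] at hAle; omega
      rcases S.eq_empty_or_nonempty with hSe | hSe
      · rw [hsum, hSe, sum_empty]; exact Nat.zero_le R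
      · obtain ⟨v0, hv0⟩ := hSe
        have hdegle : (G.neighborFinset u).card ≤ c + d := (hbound v0 hv0).2
        calc ∑ v, cnt u v = ∑ v ∈ S, cnt u v := hsum
          _ ≤ S.card * T1 := by
              refine le_trans (sum_le_card_nsmul S _ T1 (fun v hv => (hbound v hv).1)) ?_
              rw [smul_eq_mul]
          _ ≤ (c + d) * T1 := Nat.mul_le_mul_right _ (le_trans hScard hdegle)
          _ ≤ R := le_max_left _ _
  have part2 : TT.card ≤ R * n := by
    have h1 : TT.card = ∑ u, (TT.filter fun t => t.1 = u).card :=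
      card_eq_sum_card_fiberwise (fun t _ => mem_univ _)
    have h2 : ∀ u, (TT.filter fun t => t.1 = u).card = ∑ v, cnt u v := by
      intro u
      rw [hcnt]
      have := card_eq_sum_card_fiberwise
        (f := fun t : Fin n × Fin n × Finset (Fin n) × Finset (Fin n) => t.2.1)
        (s := TT.filter fun t => t.1 = u) (t := univ) (fun t _ => mem_univ _)
      rw [this]
      congr 1
      funext v
      rw [filter_filter]
    calc TT.card = ∑ u, ∑ v, cnt u v := by rw [h1]; exact Finset.sum_congr rfl fun u _ => h2 u
      _ ≤ ∑ _u : Fin n, R := Finset.sum_le_sum (fun u _ => per_u u)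
      _ = n * R := by rw [sum_const, card_univ, Fintype.card_fin, smul_eq_mul]
      _ = R * n := Nat.mul_comm _ _
  -- Part 1 : copies inject into TT
  set Copies : Set G.Subgraph := {G' : G.Subgraph | Nonempty ((doubleStar a b) ≃g G'.coe)}
    with hCopies
  have hcopyCount : _root_.copyCount (doubleStar a b) G = Copies.ncard := rfl
  have hstruct : ∀ G' : G.Subgraph, ∃ t : Fin n × Fin n × Finset (Fin n) × Finset (Fin n),
      G' ∈ Copies → (P t ∧ G'.verts = {t.1, t.2.1} ∪ ↑t.2.2.1 ∪ ↑t.2.2.2 ∧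
        (∀ x y, G'.Adj x y ↔ dsRel t.1 t.2.1 t.2.2.1 t.2.2.2 x y)) := by
    intro G'
    by_cases h : G' ∈ Copies
    · obtain ⟨u, v, Lu, Lv, hadj, hLa, hLb, hLu, hLv, hverts, hAdj⟩ :=
        copy_structure ha hb G' h.some
      refine ⟨(u, v, Lu, Lv), fun _ => ⟨?_, hverts, hAdj⟩⟩
      refine ⟨hadj, hLa, hLb, ?_, ?_⟩
      · intro x hx
        rw [hNA, mem_erase, mem_neighborFinset]
        exact ⟨(hLu x hx).2, (hLu x hx).1⟩
      · intro x hx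
        rw [mem_sdiff, hNA, mem_erase, mem_neighborFinset]
        exact ⟨⟨(hLv x hx).2.1, (hLv x hx).1⟩, (hLv x hx).2.2⟩
    · exact ⟨(⟨0, hn⟩, ⟨0, hn⟩, ∅, ∅), fun h' => absurd h' h⟩
  choose Φ hΦ using hstruct
  have hmaps : ∀ G' ∈ Copies, Φ G' ∈ (↑TT : Set _) := by
    intro G' h
    rw [mem_coe, hTT, mem_filter]
    exact ⟨mem_univ _, (hΦ G' h).1⟩
  have hinjΦ : Set.InjOn Φ Copies := by
    intro G1 h1 G2 h2 heq
    obtain ⟨hP1, hv1, hA1⟩ := hΦ G1 h1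
    obtain ⟨hP2, hv2, hA2⟩ := hΦ G2 h2
    apply SimpleGraph.Subgraph.ext
    · rw [hv1, hv2, heq]
    · funext x y
      apply propext
      rw [hA1 x y, hA2 x y, heq]
  by_cases hab' : a = b
  · -- pairing argument
    rw [if_pos hab']
    set σ : Fin n × Fin n × Finset (Fin n) × Finset (Fin n) →
        Fin n × Fin n × Finset (Fin n) × Finset (Fin n) :=
      fun t => (t.2.1, t.1, t.2.2.2, t.2.2.1) with hσ
    have hσσ : ∀ t, σ (σ t) = t := fun t => rfl
    have hσinj : Function.Injective σ := Function.LeftInverse.injective hσσ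
    have hσT : ∀ t ∈ (↑TT : Set _), σ t ∈ (↑TT : Set _) := by
      intro t ht
      rw [mem_coe, hTT, mem_filter] at ht ⊢
      obtain ⟨-, hadj, hLa, hLb, hs1, hs2⟩ := ht
      refine ⟨mem_univ _, hadj.symm, by rw [← hab'] at hLb; exact hLb,
        by rw [hab'] at hLa; exact hLa, ?_, ?_⟩
      · intro x hx
        exact (mem_sdiff.mp (hs2 hx)).1
      · intro x hx
        rw [mem_sdiff]
        refine ⟨hs1 hx, fun hx2 => (mem_sdiff.mp (hs2 hx2)).2 hx⟩
    set D1 : Set _ := Φ '' Copies with hD1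
    set D2 : Set _ := σ '' D1 with hD2
    have hD1sub : D1 ⊆ ↑TT := by
      rintro x ⟨G', hG', rfl⟩
      exact hmaps G' hG'
    have hD2sub : D2 ⊆ ↑TT := by
      rintro x ⟨y, hy, rfl⟩
      exact hσT y (hD1sub hy)
    have hdisj : Disjoint D1 D2 := by
      rw [Set.disjoint_left]
      rintro x ⟨Gs, hGs, rfl⟩ ⟨y, ⟨Gt, hGt, rfl⟩, hxy⟩
      -- Φ Gs = σ (Φ Gt)
      obtain ⟨hPs, hvs, hAs⟩ := hΦ Gs hGs
      obtain ⟨hPt', hvt, hAt⟩ := hΦ Gt hGt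
      have hx1 : (Φ Gs).1 = (Φ Gt).2.1 := congrArg Prod.fst hxy.symm
      have hx2 : (Φ Gs).2.1 = (Φ Gt).1 := congrArg (fun p => p.2.1) hxy.symm
      have hx3 : (Φ Gs).2.2.1 = (Φ Gt).2.2.2 := congrArg (fun p => p.2.2.1) hxy.symm
      have hx4 : (Φ Gs).2.2.2 = (Φ Gt).2.2.1 := congrArg (fun p => p.2.2.2) hxy.symm
      have hGeq : Gs = Gt := by
        apply SimpleGraph.Subgraph.ext
        · rw [hvs, hvt, hx1, hx2, hx3, hx4]
          exact set_swap _ _ _ _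
        · funext x y
          apply propext
          rw [hAs x y, hAt x y, hx1, hx2, hx3, hx4]
          exact dsRel_swap _ _ _ _ x y
      have h1 : (Φ Gt).1 = (Φ Gt).2.1 := by
        have := hx1; rw [hGeq] at this; exact this
      exact hPt'.1.ne h1
    have hfin : (↑TT : Set (Fin n × Fin n × Finset (Fin n) × Finset (Fin n))).Finite := TT.finite_toSet
    have hD1fin : D1.Finite := hfin.subset hD1sub
    have hD2fin : D2.Finite := hfin.subset hD2sub
    have hc1 : D1.ncard = Copies.ncard := Set.ncard_image_of_injOn hinjΦ
    have hc2 : D2.ncard = D1.ncard := Set.ncard_image_of_injective _ hσinj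
    have hunion : (D1 ∪ D2).ncard = D1.ncard + D2.ncard := Set.ncard_union_eq hdisj hD1fin hD2fin
    have hle : (D1 ∪ D2).ncard ≤ TT.card := by
      rw [← Set.ncard_coe_finset TT]
      exact Set.ncard_le_ncard (Set.union_subset hD1sub hD2sub) hfin
    rw [hcopyCount]
    omega
  · rw [if_neg hab', one_mul, hcopyCount]
    have := Set.ncard_le_ncard_of_injOn Φ hmaps hinjΦ TT.finite_toSet
    rw [Set.ncard_coe_finset] at this
    exact le_trans this part2

/-- for `c ≤ a ≤ b < d`, `ex(n, S_{a,b}, S_{c,d}) ≤ r·n`. -/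
theorem exGen_doubleStar_doubleStar_upper (a b c d : ℕ) (hc : 0 < c)
    (hca : c ≤ a) (hab : a ≤ b) (hbd : b < d) (r : ℝ)
    (hr : r = if a = b
      then max ((((c : ℝ) + d) / 2) * ((c + d - 1).choose a) * ((c + d - 1 - a).choose b))
               (((d : ℝ) / 2) * ((d - 1).choose a) * ((d - 1).choose b))
      else max (((c : ℝ) + d) * ((c + d - 1).choose a) * ((c + d - 1 - a).choose b))
               ((d : ℝ) * ((d - 1).choose a) * ((d - 1).choose b))) :
    ∀ n : ℕ, 0 < n →
      (exGen n (doubleStar a b) (doubleStar c d) : ℝ) ≤ r * n := by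
  intro n hn
  classical
  set R := max ((c + d) * ((c + d - 1).choose a * (c + d - 1 - a).choose b))
      (d * ((d - 1).choose a * (d - 1).choose b)) with hR
  have hbot : ¬ Contains (doubleStar c d) (⊥ : SimpleGraph (Fin n)) := by
    rintro ⟨f, hf⟩
    have hadj : (doubleStar c d).Adj 0 1 := by
      rw [doubleStar_adj]
      constructor
      · intro h
        have := congrArg Fin.val h
        simp [Fin.val_zero, Fin.val_one] at this
      · exact Or.inl (Or.inl ⟨rfl, by simp [Fin.val_one]⟩)
    exact absurd (f.map_adj hadj) (by simp)
  set S := {N | ∃ G : SimpleGraph (Fin n),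
      ¬ Contains (doubleStar c d) G ∧ N = _root_.copyCount (doubleStar a b) G} with hSdef
  have hSne : S.Nonempty := ⟨_, ⊥, hbot, rfl⟩
  have hBound : ∀ N ∈ S, (if a = b then 2 else 1) * N ≤ R * n := by
    rintro N ⟨G, hfree, rfl⟩
    exact key_count hn hc hca hab hbd G hfree
  have hBdd : BddAbove S := by
    refine ⟨R * n, fun N hN => ?_⟩
    have := hBound N hN
    split_ifs at this <;> omega
  have hmem := Nat.sSup_mem hSne hBdd
  have hkey : (if a = b then 2 else 1) * sSup S ≤ R * n := hBound _ hmem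
  have hsup : exGen n (doubleStar a b) (doubleStar c d) = sSup S := rfl
  rw [hsup]
  have hcast : ((R : ℝ)) = max (((c : ℝ) + d) * (((c + d - 1).choose a : ℝ) *
      ((c + d - 1 - a).choose b : ℝ)))
      ((d : ℝ) * (((d - 1).choose a : ℝ) * ((d - 1).choose b : ℝ))) := by
    rw [hR]
    push_cast
    rfl
  by_cases hab' : a = b
  · rw [if_pos hab'] at hkey
    have hr' : r = (R : ℝ) / 2 := by
      rw [hr, if_pos hab', hcast]
      have e1 : (((c : ℝ) + d) / 2) * ((c + d - 1).choose a : ℝ) * ((c + d - 1 - a).choose b : ℝ)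
          = (((c : ℝ) + d) * (((c + d - 1).choose a : ℝ) * ((c + d - 1 - a).choose b : ℝ))) / 2 := by
        ring
      have e2 : ((d : ℝ) / 2) * ((d - 1).choose a : ℝ) * ((d - 1).choose b : ℝ)
          = ((d : ℝ) * (((d - 1).choose a : ℝ) * ((d - 1).choose b : ℝ))) / 2 := by
        ring
      rw [e1, e2, max_div_div_right (by norm_num : (0:ℝ) ≤ 2)]
    have hcle : ((2 * sSup S : ℕ) : ℝ) ≤ ((R * n : ℕ) : ℝ) := Nat.cast_le.mpr hkey
    push_cast at hcle
    rw [hr']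
    have hn' : (0:ℝ) ≤ (n:ℝ) := Nat.cast_nonneg n
    nlinarith [hcle]
  · rw [if_neg hab', one_mul] at hkey
    have hr' : r = (R : ℝ) := by rw [hr, if_neg hab', hcast]; ring_nf
    have hcle : ((sSup S : ℕ) : ℝ) ≤ ((R * n : ℕ) : ℝ) := Nat.cast_le.mpr hkey
    push_cast at hcle
    rw [hr']
    linarith
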